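/- Let Z be a real random variable with the standard normal distribution N(0,1). Then for every b ∈ ℝ and every u ∈ [0,1], P( 1 − |Φ(Z + b) − Φ(−Z)| ≤ u ) = u; that is, the FAB p-value p(Z,b) is uniformly distributed on (0,1) under the null hypothesis. -/

import Mathlib

open MeasureTheory ProbabilityTheory

/-- Φ, the standard normal cumulative distribution function. -/
noncomputable def Phi : ℝ → ℝ := fun x => ProbabilityTheory.cdf (gaussianReal 0 1) x

lemma ofReal_Phi (x : ℝ) : ENNReal.ofReal (Phi x) = gaussianReal 0 1 (Set.Iic x) :=
  ofReal_cdf _ x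

lemma Phi_nonneg (x : ℝ) : 0 ≤ Phi x := cdf_nonneg _ x
lemma Phi_le_one (x : ℝ) : Phi x ≤ 1 := cdf_le_one _ x

lemma gauss_ne_zero {s : Set ℝ} (h : volume s ≠ 0) : gaussianReal 0 1 s ≠ 0 :=
  fun h0 => h (gaussianReal_absolutelyContinuous' 0 one_ne_zero h0)

lemma gauss_singleton (x : ℝ) : gaussianReal 0 1 {x} = 0 :=
  gaussianReal_absolutelyContinuous 0 one_ne_zero (measure_singleton x)

lemma Phi_eq_toReal (x : ℝ) : Phi x = (gaussianReal 0 1 (Set.Iic x)).toReal :=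
  (cdf_eq_real _ x).trans (measureReal_def _ _)

lemma Phi_strictMono : StrictMono Phi := by
  intro x y hxy
  have h1 : gaussianReal 0 1 (Set.Iic y) = gaussianReal 0 1 (Set.Iic x) + gaussianReal 0 1 (Set.Ioc x y) := by
    rw [← measure_union (Set.Iic_disjoint_Ioc le_rfl)
      measurableSet_Ioc, Set.Iic_union_Ioc_eq_Iic hxy.le]
  have h2 : gaussianReal 0 1 (Set.Ioc x y) ≠ 0 := by
    apply gauss_ne_zero
    rw [Real.volume_Ioc]
    simp [hxy]
  have hfin : gaussianReal 0 1 (Set.Ioc x y) ≠ ⊤ := measure_ne_top _ _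
  rw [Phi_eq_toReal, Phi_eq_toReal, h1]
  rw [ENNReal.toReal_add (measure_ne_top _ _) hfin]
  have := ENNReal.toReal_pos h2 hfin
  linarith

lemma Phi_lt_one (x : ℝ) : Phi x < 1 := by
  have h1 : gaussianReal 0 1 (Set.Iic x) + gaussianReal 0 1 (Set.Ioi x) = 1 := by
    rw [← measure_union (by simp [Set.disjoint_left]) measurableSet_Ioi, Set.Iic_union_Ioi]
    exact measure_univ
  have h2 : gaussianReal 0 1 (Set.Ioi x) ≠ 0 := by
    apply gauss_ne_zero; simp
  have hx := Phi_eq_toReal x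
  have h3 : gaussianReal 0 1 (Set.Iic x) < 1 := by
    by_contra h
    push_neg at h
    have : gaussianReal 0 1 (Set.Iic x) = 1 := le_antisymm prob_le_one h
    rw [this] at h1
    have : gaussianReal 0 1 (Set.Ioi x) = 0 := by
      have h4 : (1:ENNReal) + gaussianReal 0 1 (Set.Ioi x) = 1 + 0 := by rw [add_zero, h1]
      exact (ENNReal.add_right_inj (by simp)).1 h4
    exact h2 this
  rw [hx]
  calc (gaussianReal 0 1 (Set.Iic x)).toReal < (1 : ENNReal).toReal := by
        exact ENNReal.toReal_strict_mono (by simp) h3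
    _ = 1 := by simp

lemma Phi_pos (x : ℝ) : 0 < Phi x := by
  have h2 : gaussianReal 0 1 (Set.Iic x) ≠ 0 := by
    apply gauss_ne_zero; simp
  rw [Phi_eq_toReal]
  exact ENNReal.toReal_pos h2 (measure_ne_top _ _)

lemma Phi_eq_integral (x : ℝ) : Phi x = ∫ t in Set.Iic x, gaussianPDFReal 0 1 t := by
  rw [Phi_eq_toReal, gaussianReal_apply_eq_integral 0 one_ne_zero,
    ENNReal.toReal_ofReal (setIntegral_nonneg measurableSet_Iic
      (fun t _ => gaussianPDFReal_nonneg 0 1 t))]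

lemma Phi_continuous : Continuous Phi := by
  have hint : Integrable (gaussianPDFReal 0 1) := integrable_gaussianPDFReal 0 1
  have key : ∀ x : ℝ, Phi x = Phi 0 + ∫ t in (0:ℝ)..x, gaussianPDFReal 0 1 t := by
    intro x
    rcases le_or_gt 0 x with h | h
    · rw [intervalIntegral.integral_of_le h, Phi_eq_integral, Phi_eq_integral,
        ← setIntegral_union (Set.Iic_disjoint_Ioc le_rfl)
          measurableSet_Ioc hint.integrableOn hint.integrableOn,
        Set.Iic_union_Ioc_eq_Iic h]
    · rw [intervalIntegral.integral_of_ge h.le]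
      have hkey : Phi 0 = Phi x + ∫ t in Set.Ioc x 0, gaussianPDFReal 0 1 t := by
        rw [Phi_eq_integral, Phi_eq_integral,
          ← setIntegral_union (Set.Iic_disjoint_Ioc le_rfl)
            measurableSet_Ioc hint.integrableOn hint.integrableOn,
          Set.Iic_union_Ioc_eq_Iic h.le]
      rw [hkey]; ring
  have : Continuous fun x => Phi 0 + ∫ t in (0:ℝ)..x, gaussianPDFReal 0 1 t :=
    continuous_const.add (hint.continuous_primitive 0)
  exact this.congr (fun x => (key x).symm)

lemma Phi_tendsto_atTop : Filter.Tendsto Phi Filter.atTop (nhds 1) := tendsto_cdf_atTop _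
lemma Phi_tendsto_atBot : Filter.Tendsto Phi Filter.atBot (nhds 0) := tendsto_cdf_atBot _

lemma Phi_neg (x : ℝ) : Phi (-x) = 1 - Phi x := by
  have hmap : (gaussianReal 0 1).map (fun y => -1 * y) = gaussianReal 0 1 := by
    rw [gaussianReal_map_const_mul (-1 : ℝ)]
    norm_num
  have h1 : gaussianReal 0 1 (Set.Iic (-x)) = gaussianReal 0 1 (Set.Ici x) := by
    conv_lhs => rw [← hmap]
    rw [Measure.map_apply (by fun_prop) measurableSet_Iic]
    congr 1
    ext y
    simp only [Set.mem_preimage, Set.mem_Iic, Set.mem_Ici, neg_one_mul]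
    constructor <;> intro h <;> linarith
  have h2 : gaussianReal 0 1 (Set.Ici x) = gaussianReal 0 1 (Set.Ioi x) := by
    rw [← Set.Ioi_union_left, measure_union (by simp) (measurableSet_singleton x),
      gauss_singleton, add_zero]
  have hsum : gaussianReal 0 1 (Set.Iic x) + gaussianReal 0 1 (Set.Ioi x) = 1 := by
    rw [← measure_union (by simp [Set.disjoint_left]) measurableSet_Ioi, Set.Iic_union_Ioi]
    exact measure_univ
  have := ENNReal.toReal_add (a := gaussianReal 0 1 (Set.Iic x))
    (b := gaussianReal 0 1 (Set.Ioi x)) (measure_ne_top _ _) (measure_ne_top _ _)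
  rw [hsum] at this
  simp only [ENNReal.toReal_one] at this
  rw [Phi_eq_toReal, Phi_eq_toReal, h1, h2]
  linarith

lemma ofReal_one_sub_Phi (x : ℝ) :
    ENNReal.ofReal (1 - Phi x) = gaussianReal 0 1 (Set.Ici x) := by
  have h2 : gaussianReal 0 1 (Set.Ici x) = gaussianReal 0 1 (Set.Ioi x) := by
    rw [← Set.Ioi_union_left, measure_union (by simp) (measurableSet_singleton x),
      gauss_singleton, add_zero]
  have h3 : gaussianReal 0 1 (Set.Ioi x) = 1 - gaussianReal 0 1 (Set.Iic x) := by
    rw [← Set.compl_Iic, prob_compl_eq_one_sub measurableSet_Iic]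
  rw [h2, h3, ← ofReal_Phi, ← ENNReal.ofReal_one, ← ENNReal.ofReal_sub _ (Phi_nonneg x)]

noncomputable def gFab (b : ℝ) : ℝ → ℝ := fun z => Phi (z + b) + Phi z - 1

lemma gFab_strictMono (b : ℝ) : StrictMono (gFab b) := by
  intro x y hxy
  have h1 := Phi_strictMono (show x + b < y + b by linarith)
  have h2 := Phi_strictMono hxy
  simp only [gFab]
  linarith

lemma gFab_continuous (b : ℝ) : Continuous (gFab b) := by
  exact ((Phi_continuous.comp (continuous_id.add continuous_const)).add
    Phi_continuous).sub continuous_const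

lemma gFab_abs_lt (b z : ℝ) : |gFab b z| < 1 := by
  rw [abs_lt]
  have h1 := Phi_lt_one (z + b); have h2 := Phi_lt_one z
  have h3 := Phi_pos (z + b); have h4 := Phi_pos z
  constructor <;> simp only [gFab] <;> linarith

lemma gFab_neg (b z : ℝ) : gFab b (-z - b) = -(gFab b z) := by
  simp only [gFab]
  rw [show -z - b + b = -z from by ring, show -z - b = -(z + b) from by ring,
    Phi_neg, Phi_neg]
  ring

lemma gFab_tendsto_atTop (b : ℝ) :
    Filter.Tendsto (gFab b) Filter.atTop (nhds 1) := by
  have h1 : Filter.Tendsto (fun z => Phi (z + b)) Filter.atTop (nhds 1) :=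
    Phi_tendsto_atTop.comp (Filter.tendsto_atTop_add_const_right _ b Filter.tendsto_id)
  have := (h1.add Phi_tendsto_atTop).sub_const 1
  rw [show (1:ℝ) + 1 - 1 = 1 by norm_num] at this
  exact this

lemma gFab_tendsto_atBot (b : ℝ) :
    Filter.Tendsto (gFab b) Filter.atBot (nhds (-1)) := by
  have h1 : Filter.Tendsto (fun z => Phi (z + b)) Filter.atBot (nhds 0) :=
    Phi_tendsto_atBot.comp (Filter.tendsto_atBot_add_const_right _ b Filter.tendsto_id)
  have := (h1.add Phi_tendsto_atBot).sub_const 1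
  rw [show (0:ℝ) + 0 - 1 = -1 by norm_num] at this
  exact this

theorem stmt_12 {Ω : Type*} [MeasurableSpace Ω] (P : Measure Ω) [IsProbabilityMeasure P]
    (Z : Ω → ℝ) (hZ : P.map Z = gaussianReal 0 1) (b : ℝ) (u : ℝ) (hu : u ∈ Set.Icc (0 : ℝ) 1) :
    P {ω | 1 - |Phi (Z ω + b) - Phi (-Z ω)| ≤ u} = ENNReal.ofReal u := by
  obtain ⟨hu0, hu1⟩ := hu
  have hZmeas : AEMeasurable Z P := by
    apply aemeasurable_of_map_neZero
    rw [hZ]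
    exact ⟨IsProbabilityMeasure.ne_zero _⟩
  set S : Set ℝ := {z | 1 - |gFab b z| ≤ u} with hS
  have hSm : MeasurableSet S := by
    have : S = (fun z => 1 - |gFab b z|) ⁻¹' Set.Iic u := rfl
    rw [this]
    exact ((continuous_const.sub (gFab_continuous b).abs)).measurable measurableSet_Iic
  have hset : {ω | 1 - |Phi (Z ω + b) - Phi (-Z ω)| ≤ u} = Z ⁻¹' S := by
    ext ω
    simp only [Set.mem_setOf_eq, Set.mem_preimage, hS, gFab, Phi_neg]
    constructor <;> intro h <;> (convert h using 3 ; ring)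
  rw [hset, ← Measure.map_apply_of_aemeasurable hZmeas hSm, hZ]
  rcases eq_or_lt_of_le hu1 with h1 | h1
  · -- u = 1
    have : S = Set.univ := by
      ext z
      simp only [hS, Set.mem_setOf_eq, Set.mem_univ, iff_true, h1]
      have := abs_nonneg (gFab b z)
      linarith
    subst h1
    rw [this]
    simp
  rcases eq_or_lt_of_le hu0 with h0 | h0
  · -- u = 0
    have : S = ∅ := by
      ext z
      simp only [hS, Set.mem_setOf_eq, Set.mem_empty_iff_false, iff_false, not_le, ← h0]
      
      have := gFab_abs_lt b z
      linarith
    rw [this, ← h0]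
    simp
  · -- 0 < u < 1
    obtain ⟨x₂, hx₂⟩ := ((gFab_tendsto_atTop b).eventually
      (eventually_gt_nhds (show 1 - u < 1 by linarith))).exists
    obtain ⟨x₁, hx₁⟩ := ((gFab_tendsto_atBot b).eventually
      (eventually_lt_nhds (show (-1 : ℝ) < 1 - u by linarith))).exists
    have hx12 : x₁ ≤ x₂ := ((gFab_strictMono b).lt_iff_lt.1 (by linarith)).le
    obtain ⟨a, _, ha⟩ := intermediate_value_Icc hx12 (gFab_continuous b).continuousOn
      (Set.mem_Icc.2 ⟨hx₁.le, hx₂.le⟩)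
    have hca : -a - b < a := (gFab_strictMono b).lt_iff_lt.1 (by rw [gFab_neg, ha]; linarith)
    have hSeq : S = Set.Iic (-a - b) ∪ Set.Ici a := by
      ext z
      simp only [hS, Set.mem_setOf_eq, Set.mem_union, Set.mem_Iic, Set.mem_Ici]
      rw [show (1 - |gFab b z| ≤ u) ↔ (1 - u ≤ |gFab b z|) by constructor <;> intro <;> linarith,
        le_abs]
      constructor
      · rintro (h | h)
        · exact Or.inr ((gFab_strictMono b).le_iff_le.1 (by rw [ha]; linarith))
        · exact Or.inl ((gFab_strictMono b).le_iff_le.1 (by rw [gFab_neg, ha]; linarith))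
      · rintro (h | h)
        · refine Or.inr ?_
          have := (gFab_strictMono b).le_iff_le.2 h
          rw [gFab_neg, ha] at this
          linarith
        · refine Or.inl ?_
          have := (gFab_strictMono b).le_iff_le.2 h
          rw [ha] at this
          linarith
    rw [hSeq, measure_union ((Set.Iic_disjoint_Ioi le_rfl).mono_right
      (Set.Ici_subset_Ioi.2 hca)) measurableSet_Ici,
      ← ofReal_Phi, ← ofReal_one_sub_Phi, ← ENNReal.ofReal_add (Phi_nonneg _)
      (by linarith [Phi_le_one a])]
    congr 1
    have hc : Phi (-a - b) = 1 - Phi (a + b) := by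
      rw [show -a - b = -(a + b) by ring, Phi_neg]
    simp only [gFab] at ha
    linarith
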